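/- For every real number c > 0, the integral ∫₀¹ log( c² + 4·cos²(π t / 2) ) dt equals 2 · log( (c + √(c² + 4)) / 2 ). -/

import Mathlib

open Real
open Filter MeasureTheory intervalIntegral
set_option maxHeartbeats 1000000


lemma deriv_A_aux (c : ℝ) (hc : 0 < c) (t : ℝ) :
    HasDerivAt (fun t : ℝ => 2*c*t/(c*Real.sqrt (c^2+4))
        - (4*c/(Real.pi*(c*Real.sqrt (c^2+4)))) *
          Real.arctan (2*Real.sin (Real.pi*t)/((c^2+2) + c*Real.sqrt (c^2+4) + 2*Real.cos (Real.pi*t))))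
      (2*c/(c^2 + 4*Real.cos (Real.pi*t/2)^2)) t := by
  have hs : (0:ℝ) < Real.sqrt (c^2+4) := Real.sqrt_pos.2 (by positivity)
  have hs2 : Real.sqrt (c^2+4) ^ 2 = c^2+4 := Real.sq_sqrt (by positivity)
  set s := Real.sqrt (c^2+4) with hsdef
  set a : ℝ := c^2+2 with hadef
  set d : ℝ := c * s with hddef
  have hd : 0 < d := by positivity
  have hd2 : d^2 = a^2 - 4 := by
    have : d^2 = c^2 * s^2 := by ring
    rw [this, hs2]; ring
  set x := Real.cos (Real.pi*t) with hxdef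
  set y := Real.sin (Real.pi*t) with hydef
  have hxy : y^2 = 1 - x^2 := by
    have := Real.sin_sq_add_cos_sq (Real.pi*t); nlinarith [this]
  have hx1 : -1 ≤ x := Real.neg_one_le_cos _
  have hx2 : x ≤ 1 := Real.cos_le_one _
  have hw : (0:ℝ) < a + d + 2*x := by nlinarith
  have hax : (0:ℝ) < a + 2*x := by nlinarith
  have had : (0:ℝ) < a + d := by nlinarith
  -- derivative of sin (π t)
  have hlint : HasDerivAt (fun t : ℝ => Real.pi * t) Real.pi t := by
    simpa using (hasDerivAt_id t).const_mul Real.pi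
  have hsin : HasDerivAt (fun t : ℝ => Real.sin (Real.pi*t)) (Real.cos (Real.pi*t) * Real.pi) t :=
    (Real.hasDerivAt_sin (Real.pi*t)).comp t hlint
  have hcos : HasDerivAt (fun t : ℝ => Real.cos (Real.pi*t)) (-Real.sin (Real.pi*t) * Real.pi) t :=
    (Real.hasDerivAt_cos (Real.pi*t)).comp t hlint
  have hnum : HasDerivAt (fun t : ℝ => 2*Real.sin (Real.pi*t)) (2*(Real.cos (Real.pi*t) * Real.pi)) t :=
    hsin.const_mul 2
  have hden : HasDerivAt (fun t : ℝ => a + d + 2*Real.cos (Real.pi*t))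
      (2*(-Real.sin (Real.pi*t) * Real.pi)) t := (hcos.const_mul 2).const_add (a+d)
  have hu : HasDerivAt (fun t : ℝ => 2*Real.sin (Real.pi*t)/(a + d + 2*Real.cos (Real.pi*t)))
      ((2*(x * Real.pi) * (a+d+2*x) - 2*y*(2*(-y * Real.pi))) / (a+d+2*x)^2) t := by
    exact hnum.div hden (by rw [← hxdef]; exact ne_of_gt hw)
  have harc : HasDerivAt (fun t : ℝ =>
      Real.arctan (2*Real.sin (Real.pi*t)/(a + d + 2*Real.cos (Real.pi*t))))
      ((1/(1+(2*y/(a+d+2*x))^2)) * ((2*(x * Real.pi) * (a+d+2*x) - 2*y*(2*(-y * Real.pi))) / (a+d+2*x)^2)) t := by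
    exact (Real.hasDerivAt_arctan (2*y/(a+d+2*x))).comp t hu
  have hlin : HasDerivAt (fun t : ℝ => 2*c*t/d) (2*c/d) t := by
    simpa using ((hasDerivAt_id t).const_mul (2*c)).div_const d
  have htot := hlin.sub (harc.const_mul (4*c/(Real.pi*d)))
  refine htot.congr_deriv (Eq.symm ?_)
  have hcoshalf : Real.cos (Real.pi*t/2)^2 = (1 + x)/2 := by
    rw [hxdef, Real.cos_sq, show (2:ℝ)*(Real.pi*t/2) = Real.pi*t from by ring]; ring
  rw [hcoshalf]
  have hπ : (0:ℝ) < Real.pi := Real.pi_pos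
  have haux : 2*x*(a+d+2*x) + 4*y^2 = (a+d)*(a+2*x-d) := by nlinarith [hxy, hd2]
  have hk1 : (a+d+2*x)^2 + 4*y^2 = 2*(a+d)*(a+2*x) := by nlinarith [hxy, hd2]
  have h1 : c^2 + 4*((1+x)/2) = a + 2*x := by rw [hadef]; ring
  rw [h1]
  have e1 : (1/(1+(2*y/(a+d+2*x))^2)) * ((2*(x * Real.pi) * (a+d+2*x) - 2*y*(2*(-y * Real.pi))) / (a+d+2*x)^2)
      = 2*Real.pi*(2*x*(a+d+2*x)+4*y^2) / (2*((a+d+2*x)^2 + 4*y^2)) := by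
    have hw' : (a+d+2*x) ≠ 0 := ne_of_gt hw
    have hP : (a+d+2*x)^2 + 4*y^2 > 0 := by positivity
    field_simp
    ring
  rw [e1, haux, hk1]
  field_simp
  ring


lemma cont_denom (c : ℝ) (hc : 0 < c) :
    Continuous (fun t : ℝ => c^2 + 4*Real.cos (Real.pi*t/2)^2) := by
  continuity

lemma denom_pos (c : ℝ) (hc : 0 < c) (t : ℝ) :
    0 < c^2 + 4*Real.cos (Real.pi*t/2)^2 := by positivity

lemma inner_integral (c : ℝ) (hc : 0 < c) :
    ∫ t in (0:ℝ)..1, 2*c/(c^2 + 4*Real.cos (Real.pi*t/2)^2) = 2/Real.sqrt (c^2+4) := by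
  have hs : (0:ℝ) < Real.sqrt (c^2+4) := Real.sqrt_pos.2 (by positivity)
  have hInt : IntervalIntegrable (fun t : ℝ => 2*c/(c^2 + 4*Real.cos (Real.pi*t/2)^2))
      MeasureTheory.volume 0 1 := by
    apply Continuous.intervalIntegrable
    exact continuous_const.div (cont_denom c hc) (fun t => ne_of_gt (denom_pos c hc t))
  have := intervalIntegral.integral_eq_sub_of_hasDerivAt
    (f := fun t : ℝ => 2*c*t/(c*Real.sqrt (c^2+4))
        - (4*c/(Real.pi*(c*Real.sqrt (c^2+4)))) *
          Real.arctan (2*Real.sin (Real.pi*t)/((c^2+2) + c*Real.sqrt (c^2+4) + 2*Real.cos (Real.pi*t))))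
    (fun t _ => deriv_A_aux c hc t) hInt
  rw [this]
  simp [Real.sin_pi, Real.sin_zero]
  field_simp


lemma hasDerivF (c : ℝ) (hc : 0 < c) :
    HasDerivAt (fun x : ℝ => ∫ t in (0:ℝ)..1, Real.log (x^2 + 4*Real.cos (Real.pi*t/2)^2))
      (2/Real.sqrt (c^2+4)) c := by
  have hq : ∀ t : ℝ, (0:ℝ) ≤ Real.cos (Real.pi*t/2)^2 := fun t => sq_nonneg _
  have key := intervalIntegral.hasDerivAt_integral_of_dominated_loc_of_deriv_le
    (F := fun (x : ℝ) (t : ℝ) => Real.log (x^2 + 4*Real.cos (Real.pi*t/2)^2))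
    (F' := fun (x : ℝ) (t : ℝ) => 2*x/(x^2 + 4*Real.cos (Real.pi*t/2)^2))
    (x₀ := c) (bound := fun _ => 4/c) (s := Metric.ball c (c/2)) (μ := MeasureTheory.volume)
    (a := 0) (b := 1) (Metric.ball_mem_nhds c (half_pos hc))
    (Filter.Eventually.of_forall fun x => by
      apply Measurable.aestronglyMeasurable
      exact Real.measurable_log.comp (by fun_prop))
    (by
      apply Continuous.intervalIntegrable
      exact (cont_denom c hc).log (fun t => ne_of_gt (denom_pos c hc t)))
    (by
      apply Continuous.aestronglyMeasurable
      exact continuous_const.div (cont_denom c hc) (fun t => ne_of_gt (denom_pos c hc t)))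
    (Filter.Eventually.of_forall fun t _ => by
      intro x hx
      rw [Metric.mem_ball, Real.dist_eq, abs_sub_lt_iff] at hx
      have hx1 : c/2 < x := by linarith [hx.2]
      have hx0 : 0 < x := lt_trans (half_pos hc) hx1
      have hpos : 0 < x^2 + 4*Real.cos (Real.pi*t/2)^2 := by positivity
      rw [Real.norm_eq_abs, abs_of_nonneg (by positivity)]
      rw [div_le_div_iff₀ hpos hc]
      nlinarith [hq t, sq_nonneg x])
    (by apply Continuous.intervalIntegrable; continuity)
    (Filter.Eventually.of_forall fun t _ => by
      intro x hx
      rw [Metric.mem_ball, Real.dist_eq, abs_sub_lt_iff] at hx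
      have hx1 : c/2 < x := by linarith [hx.2]
      have hx0 : 0 < x := lt_trans (half_pos hc) hx1
      have hpos : 0 < x^2 + 4*Real.cos (Real.pi*t/2)^2 := by positivity
      have hin : HasDerivAt (fun x : ℝ => x^2 + 4*Real.cos (Real.pi*t/2)^2) (2*x) x := by
        simpa using (hasDerivAt_pow 2 x).add_const (4*Real.cos (Real.pi*t/2)^2)
      exact hin.log (ne_of_gt hpos))
  have h2 := key.2
  rwa [inner_integral c hc] at h2

lemma hasDerivG (x : ℝ) (hx : 0 < x) :
    HasDerivAt (fun x : ℝ => 2*Real.log ((x + Real.sqrt (x^2+4))/2)) (2/Real.sqrt (x^2+4)) x := by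
  have h4 : (0:ℝ) < x^2+4 := by positivity
  have hs : (0:ℝ) < Real.sqrt (x^2+4) := Real.sqrt_pos.2 h4
  have hin : HasDerivAt (fun x : ℝ => x^2 + 4) (2*x) x := by
    simpa using (hasDerivAt_pow 2 x).add_const (4:ℝ)
  have hsq : HasDerivAt (fun x : ℝ => Real.sqrt (x^2+4)) (1/(2*Real.sqrt (x^2+4)) * (2*x)) x :=
    (Real.hasDerivAt_sqrt (ne_of_gt h4)).comp x hin
  have hsum : HasDerivAt (fun x : ℝ => (x + Real.sqrt (x^2+4))/2)
      ((1 + 1/(2*Real.sqrt (x^2+4)) * (2*x))/2) x := ((hasDerivAt_id x).add hsq).div_const 2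
  have hpos : (0:ℝ) < (x + Real.sqrt (x^2+4))/2 := by positivity
  have hlog := (hsum.log (ne_of_gt hpos)).const_mul 2
  refine hlog.congr_deriv (Eq.symm ?_)
  have hxs : (0:ℝ) < x + Real.sqrt (x^2+4) := by positivity
  field_simp
  ring


noncomputable def Fn : ℝ → ℝ := fun x => ∫ t in (0:ℝ)..1, Real.log (x^2 + 4*Real.cos (Real.pi*t/2)^2)
noncomputable def Gn : ℝ → ℝ := fun x => 2*Real.log ((x + Real.sqrt (x^2+4))/2)

lemma Fn_bounds (b : ℝ) (hb : 0 < b) :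
    2*Real.log b ≤ Fn b ∧ Fn b ≤ Real.log (b^2+4) := by
  have hb2 : (0:ℝ) < b^2 := by positivity
  have hInt : IntervalIntegrable (fun t : ℝ => Real.log (b^2 + 4*Real.cos (Real.pi*t/2)^2))
      MeasureTheory.volume 0 1 := by
    apply Continuous.intervalIntegrable
    exact (cont_denom b hb).log (fun t => ne_of_gt (denom_pos b hb t))
  constructor
  · have h := intervalIntegral.integral_mono_on (μ := MeasureTheory.volume)
      (f := fun _ : ℝ => Real.log (b^2)) (by norm_num)
      intervalIntegrable_const hInt
      (fun t _ => Real.log_le_log hb2 (by nlinarith [sq_nonneg (Real.cos (Real.pi*t/2))]))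
    simpa [Fn, Real.log_pow] using h
  · have h := intervalIntegral.integral_mono_on (μ := MeasureTheory.volume)
      (g := fun _ : ℝ => Real.log (b^2+4)) (by norm_num)
      hInt intervalIntegrable_const
      (fun t _ => Real.log_le_log (denom_pos b hb t)
        (by nlinarith [neg_one_le_cos (Real.pi*t/2), Real.cos_le_one (Real.pi*t/2),
          sq_nonneg (Real.cos (Real.pi*t/2)), sq_nonneg (1 - Real.cos (Real.pi*t/2))]))
    simpa [Fn] using h

lemma tendsto_FG : Tendsto (fun b => Fn b - Gn b) atTop (nhds 0) := by
  have hbase : Tendsto (fun b : ℝ => 1 + 4/b^2) atTop (nhds 1) := by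
    have : Tendsto (fun b : ℝ => 4/b^2) atTop (nhds 0) := by
      apply Tendsto.div_atTop tendsto_const_nhds
      exact tendsto_pow_atTop two_ne_zero
    simpa using tendsto_const_nhds.add this
  -- upper bound tendsto
  have hu : Tendsto (fun b : ℝ => Real.log (b^2+4) - 2*Real.log b) atTop (nhds 0) := by
    have h1 : Tendsto (fun b : ℝ => (b^2+4)/b^2) atTop (nhds 1) := by
      apply hbase.congr'
      filter_upwards [eventually_gt_atTop (0:ℝ)] with b hb
      field_simp
    have h2 : Tendsto (fun b : ℝ => Real.log ((b^2+4)/b^2)) atTop (nhds 0) := by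
      have := (Real.continuousAt_log one_ne_zero).tendsto.comp h1
      simpa [Function.comp_def] using this
    apply h2.congr'
    filter_upwards [eventually_gt_atTop (0:ℝ)] with b hb
    rw [Real.log_div (by positivity) (by positivity), Real.log_pow]
    push_cast; ring
  -- P tendsto 0
  have hP : Tendsto (fun b => Fn b - 2*Real.log b) atTop (nhds 0) := by
    apply tendsto_of_tendsto_of_tendsto_of_le_of_le' tendsto_const_nhds hu
    · filter_upwards [eventually_gt_atTop (0:ℝ)] with b hb
      linarith [(Fn_bounds b hb).1]
    · filter_upwards [eventually_gt_atTop (0:ℝ)] with b hb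
      linarith [(Fn_bounds b hb).2]
  -- Q tendsto 0
  have hQ : Tendsto (fun b => Gn b - 2*Real.log b) atTop (nhds 0) := by
    have hr : Tendsto (fun b : ℝ => (1 + Real.sqrt (1 + 4/b^2))/2) atTop (nhds 1) := by
      have hsq : Tendsto (fun b : ℝ => Real.sqrt (1 + 4/b^2)) atTop (nhds 1) := by
        have := (Real.continuous_sqrt.continuousAt (x := (1:ℝ))).tendsto.comp hbase
        simpa [Function.comp_def] using this
      have := (tendsto_const_nhds (x := (1:ℝ)).add hsq).div_const 2
      norm_num at this
      exact this
    have h2 : Tendsto (fun b : ℝ => 2*Real.log ((1 + Real.sqrt (1+4/b^2))/2)) atTop (nhds 0) := by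
      have := ((Real.continuousAt_log one_ne_zero).tendsto.comp hr).const_mul (2:ℝ)
      norm_num at this
      exact this
    apply h2.congr'
    filter_upwards [eventually_gt_atTop (0:ℝ)] with b hb
    have hs : (0:ℝ) < Real.sqrt (b^2+4) := Real.sqrt_pos.2 (by positivity)
    have hbs : Real.sqrt (b^2+4) = b * Real.sqrt (1+4/b^2) := by
      rw [show (b:ℝ)^2+4 = b^2*(1+4/b^2) by field_simp,
        Real.sqrt_mul (sq_nonneg b), Real.sqrt_sq hb.le]
    have hr0 : (0:ℝ) < (1 + Real.sqrt (1+4/b^2))/2 := by positivity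
    simp only [Gn, hbs]
    rw [show (b + b*Real.sqrt (1+4/b^2))/2 = b * ((1+Real.sqrt (1+4/b^2))/2) by ring,
        Real.log_mul hb.ne' (ne_of_gt hr0)]
    ring
  have := hP.sub hQ
  simp only [sub_zero] at this
  exact this.congr (fun b => by ring)

lemma key1 (c : ℝ) (hc : 0 < c) (b : ℝ) (hb : c ≤ b) : Fn b - Gn b = Fn c - Gn c := by
  have h := eq_of_has_deriv_right_eq
    (f' := fun x => 2/Real.sqrt (x^2+4)) (a := c) (b := b)
    (f := Fn) (g := fun y => (Fn c - Gn c) + Gn y)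
    (fun x hx => (hasDerivF x (lt_of_lt_of_le hc hx.1)).hasDerivWithinAt)
    (fun x hx => ((hasDerivG x (lt_of_lt_of_le hc hx.1)).const_add (Fn c - Gn c)).hasDerivWithinAt)
    (fun x hx => (hasDerivF x (lt_of_lt_of_le hc hx.1)).continuousAt.continuousWithinAt)
    (fun x hx => ((hasDerivG x (lt_of_lt_of_le hc hx.1)).const_add (Fn c - Gn c)).continuousAt.continuousWithinAt)
    (by show Fn c = Fn c - Gn c + Gn c; ring)
  have h2 := h b ⟨hb, le_refl b⟩
  linarith [h2]

theorem cycleDicot_free_energy_integral (c : ℝ) (hc : 0 < c) :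
    ∫ t in (0:ℝ)..1, Real.log (c ^ 2 + 4 * Real.cos (Real.pi * t / 2) ^ 2)
      = 2 * Real.log ((c + Real.sqrt (c ^ 2 + 4)) / 2) := by
  have hconst : Tendsto (fun b => Fn b - Gn b) atTop (nhds (Fn c - Gn c)) := by
    apply Tendsto.congr' _ tendsto_const_nhds
    filter_upwards [eventually_ge_atTop c] with b hb
    exact (key1 c hc b hb).symm
  have h0 : Fn c - Gn c = 0 := tendsto_nhds_unique hconst tendsto_FG
  have h1 : Fn c = Gn c := by linarith
  simpa [Fn, Gn] using h1
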